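/- For any $A \in \mathbb{R}$, $b, d > 0$, and $f \in \mathbb{R}$, the velocity field $u(t, x, y) = (A e^{(b-d)t} \cos(y), 0)$ with pressure $p(t, x, y) = -f A e^{(b-d)t} \sin(y)$ solves the rotating 2D Euler equations with backscatter: $\partial_t u + (u \cdot \nabla)u + f u^\perp + \nabla p = -(b\Delta + d\Delta^2)u$ and $\nabla \cdot u = 0$. In particular, for $b > d$ the $L^2$-norm of $u(t)$ on the torus grows unboundedly as $t \to \infty$. -/

import Mathlib

open MeasureTheory

/-- Partial derivative in the first spatial variable. -/
noncomputable def pdx (g : ℝ × ℝ → ℝ) (z : ℝ × ℝ) : ℝ := deriv (fun s => g (s, z.2)) z.1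

/-- Partial derivative in the second spatial variable. -/
noncomputable def pdy (g : ℝ × ℝ → ℝ) (z : ℝ × ℝ) : ℝ := deriv (fun s => g (z.1, s)) z.2

/-- Horizontal Laplacian. -/
noncomputable def lapl (g : ℝ × ℝ → ℝ) (z : ℝ × ℝ) : ℝ := pdx (pdx g) z + pdy (pdy g) z

/-- Fundamental domain of the torus `ℝ²/2πℤ²`. -/
def box : Set (ℝ × ℝ) := Set.Icc 0 (2*Real.pi) ×ˢ Set.Icc 0 (2*Real.pi)

lemma pdx_ofy (g : ℝ → ℝ) : pdx (fun z => g z.2) = fun _ => 0 := by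
  funext z; simp [pdx]

lemma pdx_zero : pdx (fun _ => (0:ℝ)) = fun _ => 0 := by funext z; simp [pdx]
lemma pdy_zero : pdy (fun _ => (0:ℝ)) = fun _ => 0 := by funext z; simp [pdy]

lemma lapl_zero : lapl (fun _ => (0:ℝ)) = fun _ => 0 := by
  funext z; simp [lapl, pdx_zero, pdy_zero, pdx, pdy]

lemma pdy_ccos (c : ℝ) : pdy (fun z => c * Real.cos z.2) = fun z => -(c * Real.sin z.2) := by
  funext z
  have := ((Real.hasDerivAt_cos z.2).const_mul c).deriv
  simpa [pdy, mul_comm] using this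

lemma pdy_csin (c : ℝ) : pdy (fun z => c * Real.sin z.2) = fun z => c * Real.cos z.2 := by
  funext z
  have := ((Real.hasDerivAt_sin z.2).const_mul c).deriv
  simpa [pdy] using this

lemma pdy_neg (g : ℝ × ℝ → ℝ) : pdy (fun z => -(g z)) = fun z => -(pdy g z) := by
  funext z; simp [pdy, deriv.neg]

lemma lapl_ccos (c : ℝ) : lapl (fun z => c * Real.cos z.2) = fun z => -(c * Real.cos z.2) := by
  funext z
  have hx : pdx (fun z : ℝ×ℝ => c * Real.cos z.2) = fun _ => (0:ℝ) :=
    pdx_ofy (fun y => c * Real.cos y)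
  simp only [lapl, hx, pdx_zero, pdy_ccos, pdy_neg, pdy_csin]
  simp

lemma lapl_csin (c : ℝ) : lapl (fun z => c * Real.sin z.2) = fun z => -(c * Real.sin z.2) := by
  funext z
  have hx : pdx (fun z : ℝ×ℝ => c * Real.sin z.2) = fun _ => (0:ℝ) :=
    pdx_ofy (fun y => c * Real.sin y)
  simp only [lapl, hx, pdx_zero, pdy_csin, pdy_ccos]
  simp

lemma lapl_neg_ccos (c : ℝ) :
    lapl (fun z => -(c * Real.cos z.2)) = fun z => c * Real.cos z.2 := by
  have h : (fun z : ℝ×ℝ => -(c * Real.cos z.2)) = fun z => (-c) * Real.cos z.2 := by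
    funext z; ring
  rw [h, lapl_ccos]
  funext z; ring

lemma int_box (c : ℝ) : (∫ z in box, c * (Real.cos z.2)^2) = c * (2*Real.pi*Real.pi) := by
  have hc : ContinuousOn (fun z : ℝ×ℝ => c * (Real.cos z.2)^2) box := by fun_prop
  have hint : IntegrableOn (fun z : ℝ×ℝ => c * (Real.cos z.2)^2) box :=
    hc.integrableOn_compact (isCompact_Icc.prod isCompact_Icc)
  have hinner : (∫ y in Set.Icc (0:ℝ) (2*Real.pi), c * (Real.cos y)^2) = c * Real.pi := by
    rw [MeasureTheory.integral_Icc_eq_integral_Ioc,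
      ← intervalIntegral.integral_of_le (by positivity : (0:ℝ) ≤ 2*Real.pi)]
    rw [intervalIntegral.integral_const_mul, integral_cos_sq]
    simp [Real.sin_two_pi, Real.cos_two_pi]
  rw [box] at hint ⊢
  rw [MeasureTheory.Measure.volume_eq_prod] at hint ⊢
  rw [MeasureTheory.setIntegral_prod _ hint]
  simp_rw [hinner]
  rw [MeasureTheory.setIntegral_const]
  simp [Real.volume_Icc, ENNReal.toReal_ofReal Real.two_pi_pos.le]
  rw [max_eq_left]
  ring
  positivity

lemma int_box' (c : ℝ) :
    (∫ z in box, ((c * Real.cos z.2)^2 + (0:ℝ)^2)) = c^2 * (2*Real.pi*Real.pi) := by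
  have h : (fun z : ℝ×ℝ => (c * Real.cos z.2)^2 + (0:ℝ)^2)
      = fun z => c^2 * (Real.cos z.2)^2 := by funext z; ring
  rw [h, int_box]

theorem explicit_growing_solution_2DEuler_backscatter (A b d f : ℝ) (hb : 0 < b) (hd : 0 < d) :
    let u1 : ℝ → ℝ × ℝ → ℝ := fun t z => A * Real.exp ((b - d)*t) * Real.cos z.2
    let u2 : ℝ → ℝ × ℝ → ℝ := fun _ _ => 0
    let p : ℝ → ℝ × ℝ → ℝ := fun t z => -(f * A) * Real.exp ((b - d)*t) * Real.sin z.2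
    -- first component of the momentum equation
    (∀ t z, deriv (fun s => u1 s z) t + u1 t z * pdx (u1 t) z + u2 t z * pdy (u1 t) z
        + f * (-(u2 t z)) + pdx (p t) z
        = -(b * lapl (u1 t) z + d * lapl (lapl (u1 t)) z)) ∧
    -- second component of the momentum equation
    (∀ t z, deriv (fun s => u2 s z) t + u1 t z * pdx (u2 t) z + u2 t z * pdy (u2 t) z
        + f * (u1 t z) + pdy (p t) z
        = -(b * lapl (u2 t) z + d * lapl (lapl (u2 t)) z)) ∧
    -- incompressibility
    (∀ t z, pdx (u1 t) z + pdy (u2 t) z = 0) ∧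
    -- unbounded growth of the L² norm for b > d
    (d < b → A ≠ 0 →
      Filter.Tendsto (fun t => ∫ z in box, ((u1 t z)^2 + (u2 t z)^2))
        Filter.atTop Filter.atTop) := by
  intro u1 u2 p
  have hu1 : ∀ t, u1 t = fun z : ℝ×ℝ => (A * Real.exp ((b - d)*t)) * Real.cos z.2 := by
    intro t; funext z; simp [u1]
  have hu2 : ∀ t, u2 t = fun _ : ℝ×ℝ => (0:ℝ) := fun t => rfl
  have hp : ∀ t, p t = fun z : ℝ×ℝ => (-(f * A) * Real.exp ((b - d)*t)) * Real.sin z.2 := by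
    intro t; funext z; simp [p]
  refine ⟨?_, ?_, ?_, ?_⟩
  · -- first momentum equation
    intro t z
    have hderiv : deriv (fun s => u1 s z) t
        = A * (Real.exp ((b - d)*t) * ((b - d) * 1)) * Real.cos z.2 := by
      have h : HasDerivAt (fun s : ℝ => A * Real.exp ((b - d)*s) * Real.cos z.2)
          (A * (Real.exp ((b - d)*t) * ((b - d) * 1)) * Real.cos z.2) t :=
        ((((hasDerivAt_id t).const_mul (b - d)).exp.const_mul A).mul_const _)
      exact h.deriv
    rw [hu1 t, hp t]
    rw [hderiv, lapl_ccos, lapl_neg_ccos,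
      pdx_ofy (fun y => (A * Real.exp ((b - d)*t)) * Real.cos y),
      pdy_ccos, pdx_ofy (fun y => (-(f * A) * Real.exp ((b - d)*t)) * Real.sin y)]
    simp [hu2 t]
    ring
  · -- second momentum equation
    intro t z
    rw [hu1 t, hp t, hu2 t]
    rw [lapl_zero, lapl_zero, pdx_zero, pdy_zero, pdy_csin]
    simp
    ring
    exact deriv_const t 0
  · -- incompressibility
    intro t z
    rw [hu1 t, hu2 t, pdx_ofy (fun y => (A * Real.exp ((b - d)*t)) * Real.cos y), pdy_zero]
    simp
  · -- growth
    intro hba hA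
    have heq : (fun t => ∫ z in box, ((u1 t z)^2 + (u2 t z)^2))
        = fun t => (A^2 * (2*Real.pi*Real.pi)) *
            (Real.exp ((b - d)*t) * Real.exp ((b - d)*t)) := by
      funext t
      have : (fun z : ℝ×ℝ => (u1 t z)^2 + (u2 t z)^2)
          = fun z : ℝ×ℝ => ((A * Real.exp ((b - d)*t)) * Real.cos z.2)^2 + (0:ℝ)^2 := by
        funext z; simp [u1, u2]
      rw [this, int_box']
      ring
    rw [heq]
    have hpos : 0 < A^2 * (2*Real.pi*Real.pi) := by positivity
    have hexp : Filter.Tendsto (fun t => Real.exp ((b - d)*t)) Filter.atTop Filter.atTop :=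
      Real.tendsto_exp_atTop.comp
        (Filter.Tendsto.const_mul_atTop (by linarith) Filter.tendsto_id)
    exact Filter.Tendsto.const_mul_atTop hpos (hexp.atTop_mul_atTop₀ hexp)
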